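/- Let G be a complementary vanishing graph. If G has no dominating vertex, then G is α-robust; if G has no isolated vertex, then G is β-robust. -/
import Mathlib

/-- `A ∈ S(G)`: real symmetric matrix whose off-diagonal nonzero pattern is `E(G)`. -/
def MatIn {V : Type*} [Fintype V] (G : SimpleGraph V) (A : Matrix V V ℝ) : Prop :=
  A.IsSymm ∧ ∀ i j : V, i ≠ j → (A i j ≠ 0 ↔ G.Adj i j)

/-- `G` is complementary vanishing. -/
def CompVan {V : Type*} [Fintype V] (G : SimpleGraph V) : Prop :=
  ∃ A B : Matrix V V ℝ, MatIn G A ∧ MatIn Gᶜ B ∧ A * B = 0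

/-- `G` is α-robust. -/
def AlphaRobust {V : Type*} [Fintype V] (G : SimpleGraph V) : Prop :=
  ∃ A B : Matrix V V ℝ, MatIn G A ∧ MatIn Gᶜ B ∧ A * B = 0 ∧
    ∃ x : V → ℝ, A.mulVec x = 0 ∧ ∀ i, x i ≠ 0

/-- `G` is β-robust. -/
def BetaRobust {V : Type*} [Fintype V] (G : SimpleGraph V) : Prop :=
  ∃ A B : Matrix V V ℝ, MatIn G A ∧ MatIn Gᶜ B ∧ A * B = 0 ∧
    ∃ x : V → ℝ, B.mulVec x = 0 ∧ ∀ i, x i ≠ 0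

/-- If every row of `M` has a nonzero entry, some vector has nowhere-zero image. -/
lemma key {n : ℕ} (M : Matrix (Fin n) (Fin n) ℝ) (h : ∀ v, ∃ u, M v u ≠ 0) :
    ∃ x : Fin n → ℝ, ∀ v, M.mulVec x v ≠ 0 := by
  by_contra hc
  push_neg at hc
  set p : Fin n → Subspace ℝ (Fin n → ℝ) := fun v =>
    LinearMap.ker ((LinearMap.proj v).comp M.mulVecLin) with hp
  have hcov : ⋃ v, (p v : Set (Fin n → ℝ)) = Set.univ := by
    ext x
    simp only [Set.mem_iUnion, Set.mem_univ, iff_true, SetLike.mem_coe]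
    obtain ⟨v, hv⟩ := hc x
    exact ⟨v, by simpa [hp, LinearMap.mem_ker] using hv⟩
  obtain ⟨v, hv⟩ := Subspace.exists_eq_top_of_iUnion_eq_univ hcov
  obtain ⟨u, hu⟩ := h v
  have hmem : (Pi.single u 1 : Fin n → ℝ) ∈ p v := hv ▸ Submodule.mem_top
  have : M.mulVec (Pi.single u 1) v = 0 := by
    simpa [hp, LinearMap.mem_ker] using hmem
  rw [Matrix.mulVec_single] at this
  simp at this
  exact hu this

theorem stmt_14 {n : ℕ} (G : SimpleGraph (Fin n)) (h : CompVan G) :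
    ((¬ ∃ v : Fin n, ∀ u, u ≠ v → G.Adj v u) → AlphaRobust G) ∧
    ((¬ ∃ v : Fin n, ∀ u, ¬ G.Adj v u) → BetaRobust G) := by
  obtain ⟨A, B, hA, hB, hAB⟩ := h
  have hBA : B * A = 0 := by
    have := congrArg Matrix.transpose hAB
    rwa [Matrix.transpose_mul, hA.1, hB.1, Matrix.transpose_zero] at this
  constructor
  · intro hdom
    push_neg at hdom
    have hrow : ∀ v, ∃ u, B v u ≠ 0 := by
      intro v
      obtain ⟨u, hu, hadj⟩ := hdom v
      have : Gᶜ.Adj v u := (SimpleGraph.compl_adj G v u).mpr ⟨hu.symm, hadj⟩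
      exact ⟨u, (hB.2 v u (Ne.symm hu)).mpr this⟩
    obtain ⟨x, hx⟩ := key B hrow
    refine ⟨A, B, hA, hB, hAB, B.mulVec x, ?_, hx⟩
    rw [Matrix.mulVec_mulVec, hAB, Matrix.zero_mulVec]
  · intro hiso
    push_neg at hiso
    have hrow : ∀ v, ∃ u, A v u ≠ 0 := by
      intro v
      obtain ⟨u, hu⟩ := hiso v
      exact ⟨u, (hA.2 v u hu.ne).mpr hu⟩
    obtain ⟨x, hx⟩ := key A hrow
    refine ⟨A, B, hA, hB, hAB, A.mulVec x, ?_, hx⟩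
    rw [Matrix.mulVec_mulVec, hBA, Matrix.zero_mulVec]
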